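/- Let G be a finite group (written multiplicatively) and let S ⊆ G be a maximal product-free set with |S| = 1. Then G is isomorphic to the cyclic group of order 2, the cyclic group of order 3, the cyclic group of order 4, or the quaternion group Q₈ of order 8, and the unique element of S has prime order in G. -/

import Mathlib

lemma cyclic_aux {G : Type*} [Group G] (g : G) (n : ℕ)
    (h : ∀ x : G, x ∈ Subgroup.zpowers g) (hn : orderOf g = n) :
    Nonempty (G ≃* Multiplicative (ZMod n)) := by
  have hcyc : IsCyclic G := ⟨g, h⟩
  have hc : Nat.card G = n := by
    rw [← hn, orderOf_eq_card_of_forall_mem_zpowers h]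
  have e := zmodCyclicMulEquiv hcyc
  rw [hc] at e
  exact ⟨e.symm⟩


lemma q8_aux {G : Type*} [Group G] (i y : G) (hi4 : orderOf i = 4)
    (hiy : i * y = y * i⁻¹) (hy2 : y * y = i * i)
    (hyn : ∀ s : ℤ, y ≠ i ^ s)
    (hsurj : ∀ z : G, (∃ s : ℤ, z = i ^ s) ∨ (∃ s : ℤ, z = y * i ^ s)) :
    Nonempty (G ≃* QuaternionGroup 2) := by
  have hi4' : i ^ (4 : ℕ) = 1 := by rw [← hi4]; exact pow_orderOf_eq_one i
  have hi4z : i ^ (4 : ℤ) = 1 := by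
    rw [show (4:ℤ) = ((4:ℕ):ℤ) by norm_num, zpow_natCast, hi4']
  have L : ∀ s t : ℤ, ((s : ZMod 4) = (t : ZMod 4)) → i ^ s = i ^ t := by
    intro s t hst
    rw [ZMod.intCast_eq_intCast_iff] at hst
    obtain ⟨c, hc⟩ := hst.dvd
    have ht : t = s + 4 * c := by push_cast at hc; linarith
    rw [ht, zpow_add, zpow_mul, hi4z, one_zpow, mul_one]
  have valcast : ∀ c : ZMod 4, (((c.val : ℤ) : ZMod 4)) = c := by
    intro c
    push_cast
    simp [ZMod.natCast_val, ZMod.cast_id]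
  have Lval : ∀ (c : ZMod 4) (t : ℤ), ((t : ZMod 4) = c) → i ^ (c.val : ℤ) = i ^ t := by
    intro c t h
    exact L _ _ (by rw [valcast, h])
  have hyi : ∀ s : ℤ, i ^ s * y = y * i ^ (-s) := by
    intro s
    have hsc : SemiconjBy y i⁻¹ i := by
      unfold SemiconjBy
      rw [← hiy]
    have h2 := hsc.zpow_right s
    unfold SemiconjBy at h2
    rw [inv_zpow, ← zpow_neg] at h2
    exact h2.symm
  have hy2' : y * y = i ^ (2 : ℤ) := by
    rw [hy2, show (2:ℤ) = ((2:ℕ):ℤ) by norm_num, zpow_natCast, pow_two]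
  let f : QuaternionGroup 2 → G := fun q =>
    match q with
    | .a j => i ^ (j.val : ℤ)
    | .xa j => y * i ^ (j.val : ℤ)
  have hmul : ∀ q r : QuaternionGroup 2, f (q * r) = f q * f r := by
    intro q r
    rcases q with j | j <;> rcases r with k | k
    · show i ^ (((j + k).val : ℤ)) = i ^ (j.val : ℤ) * i ^ (k.val : ℤ)
      rw [← zpow_add]
      exact Lval _ _ (by push_cast [ZMod.natCast_val, ZMod.cast_id]; ring)
    · show y * i ^ (((k - j).val : ℤ)) = i ^ (j.val : ℤ) * (y * i ^ (k.val : ℤ))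
      have hrhs : i ^ (j.val : ℤ) * (y * i ^ (k.val : ℤ))
          = y * i ^ (-(j.val : ℤ) + (k.val : ℤ)) := by
        calc i ^ (j.val : ℤ) * (y * i ^ (k.val : ℤ))
            = (i ^ (j.val : ℤ) * y) * i ^ (k.val : ℤ) := by group
          _ = (y * i ^ (-(j.val : ℤ))) * i ^ (k.val : ℤ) := by rw [hyi]
          _ = y * i ^ (-(j.val : ℤ) + (k.val : ℤ)) := by group
      rw [hrhs]
      congr 1
      exact Lval _ _ (by push_cast [ZMod.natCast_val, ZMod.cast_id]; ring)
    · show y * i ^ (((j + k).val : ℤ)) = y * i ^ (j.val : ℤ) * i ^ (k.val : ℤ)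
      rw [mul_assoc, ← zpow_add]
      congr 1
      exact Lval _ _ (by push_cast [ZMod.natCast_val, ZMod.cast_id]; ring)
    · show i ^ (((((2:ℕ) : ZMod (2*2)) + k - j).val : ℤ)) = y * i ^ (j.val : ℤ) * (y * i ^ (k.val : ℤ))
      have hrhs : y * i ^ (j.val : ℤ) * (y * i ^ (k.val : ℤ))
          = i ^ ((2 : ℤ) + -(j.val : ℤ) + (k.val : ℤ)) := by
        calc y * i ^ (j.val : ℤ) * (y * i ^ (k.val : ℤ))
            = y * ((i ^ (j.val : ℤ) * y) * i ^ (k.val : ℤ)) := by group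
          _ = y * ((y * i ^ (-(j.val : ℤ))) * i ^ (k.val : ℤ)) := by rw [hyi]
          _ = (y * y) * (i ^ (-(j.val : ℤ)) * i ^ (k.val : ℤ)) := by group
          _ = i ^ (2 : ℤ) * (i ^ (-(j.val : ℤ)) * i ^ (k.val : ℤ)) := by rw [hy2']
          _ = i ^ ((2 : ℤ) + -(j.val : ℤ) + (k.val : ℤ)) := by group
      rw [hrhs]
      exact Lval _ _ (by push_cast [ZMod.natCast_val, ZMod.cast_id]; ring)
  let φ : QuaternionGroup 2 →* G := MonoidHom.mk' f hmul
  have hinj : Function.Injective φ := by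
    rw [injective_iff_map_eq_one]
    intro q hq
    rcases q with j | j
    · have hq' : i ^ ((j.val : ℕ) : ℤ) = 1 := hq
      rw [zpow_natCast] at hq'
      have hdvd : (4 : ℕ) ∣ j.val := hi4 ▸ orderOf_dvd_of_pow_eq_one hq'
      have hj0 : j.val = 0 := Nat.eq_zero_of_dvd_of_lt hdvd (ZMod.val_lt j)
      have : j = 0 := by rwa [ZMod.val_eq_zero] at hj0
      rw [this]
      rfl
    · have hq' : y * i ^ (j.val : ℤ) = 1 := hq
      have hy' : y = i ^ (-(j.val : ℤ)) := by
        rw [zpow_neg]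
        exact eq_inv_of_mul_eq_one_left hq'
      exact absurd hy' (hyn _)
  have hsur : Function.Surjective φ := by
    intro z
    rcases hsurj z with ⟨s, rfl⟩ | ⟨s, rfl⟩
    · exact ⟨.a ((s : ZMod 4)), Lval _ _ rfl⟩
    · exact ⟨.xa ((s : ZMod 4)), by show y * _ = _; rw [Lval _ s rfl]⟩
  exact ⟨(MulEquiv.ofBijective φ ⟨hinj, hsur⟩).symm⟩


/-- Giudici–Hart: if a finite group `G` has a maximal product-free set `S` of
cardinality one, then `G ≅ C₂`, `C₃`, `C₄` or `Q₈`, and the element of `S` has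
prime order. -/
theorem stmt_19 (G : Type*) [Group G] [Fintype G] (S : Finset G)
    (hS : ∀ x ∈ S, ∀ y ∈ S, x * y ∉ S)
    (hmax : ∀ T : Finset G, (∀ x ∈ T, ∀ y ∈ T, x * y ∉ T) → S ⊆ T → S = T)
    (hcard : S.card = 1) :
    (Nonempty (G ≃* Multiplicative (ZMod 2)) ∨ Nonempty (G ≃* Multiplicative (ZMod 3)) ∨
        Nonempty (G ≃* Multiplicative (ZMod 4)) ∨ Nonempty (G ≃* QuaternionGroup 2)) ∧
      ∀ g ∈ S, (orderOf g).Prime := by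
  classical
  obtain ⟨a, hSa⟩ := Finset.card_eq_one.mp hcard
  have haS : a ∈ S := by rw [hSa]; exact Finset.mem_singleton_self a
  have haa : a * a ∉ S := hS a haS a haS
  have hane : a ≠ 1 := by
    intro h
    apply haa
    rw [h, one_mul]; exact h ▸ haS
  have key : ∀ x : G, x = 1 ∨ x = a ∨ x = a * a ∨ x * x = a := by
    intro x
    by_contra hc
    push_neg at hc
    obtain ⟨h1, h2, h3, h4⟩ := hc
    have hT := hmax (insert x S) ?_ (Finset.subset_insert x S)
    · have hx : x ∈ S := hT ▸ Finset.mem_insert_self x S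
      rw [hSa, Finset.mem_singleton] at hx
      exact h2 hx
    · intro u hu v hv hmem
      rw [Finset.mem_insert, hSa, Finset.mem_singleton] at hu hv hmem
      rcases hu with rfl | rfl <;> rcases hv with rfl | rfl <;> rcases hmem with h | h
      · exact h1 (by rwa [mul_eq_right] at h)
      · exact h4 h
      · exact hane (by rwa [mul_eq_left] at h)
      · exact h1 (by rwa [mul_eq_right] at h)
      · exact hane (by rwa [mul_eq_right] at h)
      · exact h1 (by rwa [mul_eq_left] at h)
      · exact h3 h.symm
      · exact hane (by rwa [mul_eq_right] at h)
  have hprime : ∀ (n : ℕ), orderOf a = n → (n.Prime) → ∀ g ∈ S, (orderOf g).Prime := by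
    intro n hn hp g hg
    rw [hSa, Finset.mem_singleton] at hg
    rw [hg, hn]; exact hp
  by_cases hA : a * a = 1
  · -- a has order 2
    have horda : orderOf a = 2 := by
      have : Fact (Nat.Prime 2) := ⟨by norm_num⟩
      exact orderOf_eq_prime (by rw [pow_two]; exact hA) hane
    have key2 : ∀ x : G, x = 1 ∨ x = a ∨ x * x = a := by
      intro x
      rcases key x with h | h | h | h
      · exact Or.inl h
      · exact Or.inr (Or.inl h)
      · rw [hA] at h; exact Or.inl h
      · exact Or.inr (Or.inr h)
    by_cases hsq : ∃ x : G, x ≠ 1 ∧ x ≠ a ∧ x * x = a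
    · obtain ⟨i, hi1, hia, hi2⟩ := hsq
      have hai : a = i * i := hi2.symm
      have hi4n : i ^ (4 : ℕ) = 1 := by
        calc i ^ (4 : ℕ) = (i * i) * (i * i) := by
              rw [show (4 : ℕ) = 2 + 2 from rfl, pow_add, pow_two]
          _ = a * a := by rw [hi2]
          _ = 1 := hA
      have hi4 : orderOf i = 4 := by
        have hdvd := orderOf_dvd_of_pow_eq_one hi4n
        have hle : orderOf i ≤ 4 := Nat.le_of_dvd (by norm_num) hdvd
        have hpos : 0 < orderOf i := orderOf_pos i
        interval_cases h : orderOf i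
        · exact absurd (orderOf_eq_one_iff.mp h) hi1
        · exfalso
          have h2 : i ^ (2 : ℕ) = 1 := h ▸ pow_orderOf_eq_one i
          rw [pow_two, hi2] at h2
          exact hane h2
        · exact absurd hdvd (by norm_num)
        · rfl
      have hi4z : i ^ (4 : ℤ) = 1 := by
        rw [show (4 : ℤ) = ((4 : ℕ) : ℤ) by norm_num, zpow_natCast, hi4n]
      have hLi : ∀ s t : ℤ, (4 : ℤ) ∣ s - t → i ^ s = i ^ t := by
        intro s t hd
        obtain ⟨c, hc⟩ := hd
        have hs : s = t + 4 * c := by linarith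
        rw [hs, zpow_add, zpow_mul, hi4z, one_zpow, mul_one]
      have hp2 : i ^ (2 : ℤ) = i * i := by
        rw [show (2 : ℤ) = ((2 : ℕ) : ℤ) by norm_num, zpow_natCast, pow_two]
      have hp3 : i ^ (3 : ℤ) = i * i * i := by
        rw [show (3 : ℤ) = ((3 : ℕ) : ℤ) by norm_num, zpow_natCast, pow_succ, pow_two]
      by_cases hy : ∃ z : G, z ≠ 1 ∧ z ≠ a ∧ z ≠ i ∧ z ≠ i⁻¹
      · -- Q8 case
        obtain ⟨y, hy1, hya, hyi', hyinv⟩ := hy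
        have hrel : ∀ z : G, z ≠ 1 → z ≠ a → z ≠ i → z ≠ i⁻¹ →
            z * z = a ∧ i * z = z * i⁻¹ := by
          intro z h1 h2 h3 h4
          have hz2 : z * z = a := by
            rcases key2 z with h | h | h
            · exact absurd h h1
            · exact absurd h h2
            · exact h
          refine ⟨hz2, ?_⟩
          rcases key2 (i * z) with h | h | h
          · exact absurd (eq_inv_of_mul_eq_one_right h) h4
          · rw [hai] at h
            exact absurd (mul_left_cancel h) h3
          · -- (i*z)*(i*z) = a = z*z
            have h' : (i * z * i) * z = z * z := by
              calc (i * z * i) * z = (i * z) * (i * z) := by group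
                _ = a := h
                _ = z * z := hz2.symm
            have h'' : i * z * i = z := mul_right_cancel h'
            calc i * z = (i * z * i) * i⁻¹ := by group
              _ = z * i⁻¹ := by rw [h'']
        obtain ⟨hy2, hiy⟩ := hrel y hy1 hya hyi' hyinv
        have hyi2 : y * i = i⁻¹ * y := by
          calc y * i = i⁻¹ * (i * y) * i := by group
            _ = i⁻¹ * (y * i⁻¹) * i := by rw [hiy]
            _ = i⁻¹ * y := by group
        have hyinvq : y⁻¹ = y * a := by
          have h : y * (y * a) = 1 := by rw [← mul_assoc, hy2, hA]
          exact inv_eq_of_mul_eq_one_right h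
        have hyn : ∀ s : ℤ, y ≠ i ^ s := by
          intro s hEq
          have hmod : i ^ s = i ^ (s % 4) := hLi s (s % 4) (by omega)
          have h03 : s % 4 = 0 ∨ s % 4 = 1 ∨ s % 4 = 2 ∨ s % 4 = 3 := by omega
          rcases h03 with h | h | h | h <;> rw [hmod, h] at hEq
          · exact hy1 (by simpa using hEq)
          · exact hyi' (by simpa using hEq)
          · refine hya ?_
            rw [hEq, hai]
            exact hp2
          · refine hyinv ?_
            rw [hEq]
            rw [hLi 3 (-1) (by norm_num)]
            group
        have hsurj : ∀ z : G, (∃ s : ℤ, z = i ^ s) ∨ (∃ s : ℤ, z = y * i ^ s) := by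
          intro z
          by_cases hz1 : z = 1
          · exact Or.inl ⟨0, by rw [hz1, zpow_zero]⟩
          by_cases hza : z = a
          · exact Or.inl ⟨2, by rw [hza, hai]; exact hp2.symm⟩
          by_cases hzi : z = i
          · exact Or.inl ⟨1, by rw [hzi, zpow_one]⟩
          by_cases hzinv : z = i⁻¹
          · exact Or.inl ⟨-1, by rw [hzinv]; group⟩
          obtain ⟨hz2, hiz⟩ := hrel z hz1 hza hzi hzinv
          rcases key2 (z * y) with hw | hw | hw
          · -- z = y⁻¹ = y * a = y * i^2
            refine Or.inr ⟨2, ?_⟩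
            have hzv : z = y⁻¹ := eq_inv_of_mul_eq_one_left hw
            rw [hzv, hyinvq, hai, hp2]
          · -- z*y = a, so z = a*y⁻¹ = y
            refine Or.inr ⟨0, ?_⟩
            have hzv : z = a * y⁻¹ := by
              calc z = (z * y) * y⁻¹ := by group
                _ = a * y⁻¹ := by rw [hw]
            rw [hzv, hyinvq, ← mul_assoc]
            have hay : a * y = y * a := by
              calc a * y = (y * y) * y := by rw [← hy2]
                _ = y * (y * y) := by group
                _ = y * a := by rw [hy2]
            rw [hay, mul_assoc, hA, mul_one, zpow_zero, mul_one]
          · -- (z*y)*(z*y) = a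
            have hwi : (z * y) * i = i * (z * y) := by
              calc (z * y) * i = z * (y * i) := by group
                _ = z * (i⁻¹ * y) := by rw [hyi2]
                _ = (z * i⁻¹) * y := by group
                _ = (i * z) * y := by rw [← hiz]
                _ = i * (z * y) := by group
            have hwisq : ((z * y) * i) * ((z * y) * i) = 1 := by
              calc ((z * y) * i) * ((z * y) * i)
                  = (z * y) * ((i * (z * y)) * i) := by group
                _ = (z * y) * (((z * y) * i) * i) := by rw [← hwi]
                _ = ((z * y) * (z * y)) * (i * i) := by group
                _ = a * (i * i) := by rw [hw]
                _ = a * a := by rw [← hai]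
                _ = 1 := hA
            rcases key2 ((z * y) * i) with h | h | h
            · -- z*y = i⁻¹, z = i⁻¹*y⁻¹ = y*i^3
              refine Or.inr ⟨3, ?_⟩
              have hwv : z * y = i⁻¹ := eq_inv_of_mul_eq_one_left h
              have hzv : z = i⁻¹ * y⁻¹ := by
                calc z = (z * y) * y⁻¹ := by group
                  _ = i⁻¹ * y⁻¹ := by rw [hwv]
              rw [hzv, hyinvq, ← mul_assoc, ← hyi2, hai, hp3]
              group
            · -- z*y*i = a, so z*y = a*i⁻¹ = i, z = i*y⁻¹ = y*i
              refine Or.inr ⟨1, ?_⟩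
              have hwv : z * y = a * i⁻¹ := by
                calc z * y = ((z * y) * i) * i⁻¹ := by group
                  _ = a * i⁻¹ := by rw [h]
              have hwv' : z * y = i := by rw [hwv, hai]; group
              have hzv : z = i * y⁻¹ := by
                calc z = (z * y) * y⁻¹ := by group
                  _ = i * y⁻¹ := by rw [hwv']
              rw [hzv, hyinvq, ← mul_assoc, hiy, hai]
              group
            · exfalso
              apply hane
              rw [← hA]
              have : a = 1 := by rw [← h, hwisq]
              rw [this, one_mul]
        refine ⟨Or.inr (Or.inr (Or.inr
          (q8_aux i y hi4 hiy (by rw [hy2, hai]) hyn hsurj))), hprime 2 horda (by norm_num)⟩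
      · -- C4 case
        push_neg at hy
        have hgen : ∀ x : G, x ∈ Subgroup.zpowers i := by
          intro x
          by_cases h1 : x = 1
          · rw [h1]; exact Subgroup.one_mem _
          by_cases h2 : x = a
          · rw [h2, hai]
            exact Subgroup.mul_mem _ (Subgroup.mem_zpowers i) (Subgroup.mem_zpowers i)
          by_cases h3 : x = i
          · rw [h3]; exact Subgroup.mem_zpowers i
          · rw [hy x h1 h2 h3]
            exact Subgroup.inv_mem _ (Subgroup.mem_zpowers i)
        exact ⟨Or.inr (Or.inr (Or.inl (cyclic_aux i 4 hgen hi4))),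
          hprime 2 horda (by norm_num)⟩
    · -- C2 case
      push_neg at hsq
      have hgen : ∀ x : G, x ∈ Subgroup.zpowers a := by
        intro x
        rcases key2 x with h | h | h
        · rw [h]; exact Subgroup.one_mem _
        · rw [h]; exact Subgroup.mem_zpowers a
        · by_cases h1 : x = 1
          · rw [h1]; exact Subgroup.one_mem _
          by_cases h2 : x = a
          · rw [h2]; exact Subgroup.mem_zpowers a
          · exact absurd h (hsq x h1 h2)
      exact ⟨Or.inl (cyclic_aux a 2 hgen horda), hprime 2 horda (by norm_num)⟩
  · -- C3 case: a*a ≠ 1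
    have key3 : ∀ x : G, x = 1 ∨ x = a ∨ x = a * a := by
      intro x
      rcases key x with h | h | h | h
      · exact Or.inl h
      · exact Or.inr (Or.inl h)
      · exact Or.inr (Or.inr h)
      · -- x*x = a
        rcases key (x * a) with g | g | g | g
        · -- x = a⁻¹ and a⁻¹ = a*a
          right; right
          have hx : x = a⁻¹ := eq_inv_of_mul_eq_one_left g
          rw [hx]
          -- a⁻¹*a⁻¹ = a from h
          have h' : a⁻¹ * a⁻¹ = a := by rw [← hx]; exact h
          calc a⁻¹ = a * (a⁻¹ * a⁻¹) := by group
            _ = a * a := by rw [h']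
        · left
          have : x * a = 1 * a := by rw [g, one_mul]
          exact mul_right_cancel this
        · right; left
          exact mul_right_cancel g
        · exfalso
          have hx2 : x ^ (2 : ℕ) = a := by rw [pow_two]; exact h
          have h6 : x ^ (6 : ℕ) = x ^ (2 : ℕ) := by
            calc x ^ (6 : ℕ) = (x * x ^ (2 : ℕ)) * (x * x ^ (2 : ℕ)) := by group
              _ = (x * a) * (x * a) := by rw [hx2]
              _ = a := g
              _ = x ^ (2 : ℕ) := hx2.symm
          have h4 : x ^ (4 : ℕ) = 1 := by
            have h' : x ^ (4 : ℕ) * x ^ (2 : ℕ) = 1 * x ^ (2 : ℕ) := by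
              rw [one_mul, ← pow_add]; exact h6
            exact mul_right_cancel h'
          apply hA
          calc a * a = x ^ (2 : ℕ) * x ^ (2 : ℕ) := by rw [hx2]
            _ = x ^ (4 : ℕ) := by rw [← pow_add]
            _ = 1 := h4
    have ha3 : a * a * a = 1 := by
      rcases key3 (a * a * a) with h | h | h
      · exact h
      · exfalso
        apply hA
        have : (a * a) * a = 1 * a := by rw [h, one_mul]
        exact mul_right_cancel this
      · exfalso
        apply hane
        have : a * (a * a) = 1 * (a * a) := by
          rw [one_mul, ← mul_assoc]; exact h
        exact mul_right_cancel this
    have horda : orderOf a = 3 := by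
      have : Fact (Nat.Prime 3) := ⟨by norm_num⟩
      refine orderOf_eq_prime ?_ hane
      calc a ^ (3 : ℕ) = a * a * a := by rw [pow_succ, pow_two]
        _ = 1 := ha3
    have hgen : ∀ x : G, x ∈ Subgroup.zpowers a := by
      intro x
      rcases key3 x with h | h | h
      · rw [h]; exact Subgroup.one_mem _
      · rw [h]; exact Subgroup.mem_zpowers a
      · rw [h]
        exact Subgroup.mul_mem _ (Subgroup.mem_zpowers a) (Subgroup.mem_zpowers a)
    exact ⟨Or.inr (Or.inl (cyclic_aux a 3 hgen horda)), hprime 3 horda (by norm_num)⟩
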